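/- Let \nu > 0, let r_i = \sqrt{2 z_i} for the zeros z_i of L_N^{(\nu-1)}, and set s_n := \sum_{j=1}^N r_j^n. Then for every l \ge 1, s_{2l} = 2[ \sum_{m=0}^{l-1} s_{2(l-1-m)} s_{2m} - (l - \nu) s_{2(l-1)} ], with s_0 = N. -/

import Mathlib

open Polynomial Finset Matrix

/-- The generalized Laguerre polynomials `L_n^{(α)}`, orthogonal w.r.t. the weight
`e^{-x} x^α` on `(0,∞)`, defined via the standard three-term recurrence. -/
noncomputable def laguerre (α : ℝ) : ℕ → Polynomial ℝ
  | 0 => 1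
  | 1 => C (1 + α) - X
  | n + 2 => C (((n : ℝ) + 2)⁻¹) *
      ((C (2 * (n : ℝ) + 3 + α) - X) * laguerre α (n + 1) - C ((n : ℝ) + 1 + α) * laguerre α n)

lemma lag_rec (α : ℝ) (n : ℕ) :
    C ((n : ℝ) + 2) * laguerre α (n + 2) =
      (C (2 * (n : ℝ) + 3 + α) - X) * laguerre α (n + 1) - C ((n : ℝ) + 1 + α) * laguerre α n := by
  have h : ((n : ℝ) + 2) ≠ 0 := by positivity
  rw [show laguerre α (n+2) = C (((n : ℝ) + 2)⁻¹) *
      ((C (2 * (n : ℝ) + 3 + α) - X) * laguerre α (n + 1) - C ((n : ℝ) + 1 + α) * laguerre α n)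
      from rfl, ← mul_assoc, ← C_mul, mul_inv_cancel₀ h, C_1, one_mul]

lemma lag_deriv (α : ℝ) (n : ℕ) :
    derivative (laguerre α (n+1)) = derivative (laguerre α n) - laguerre α n ∧
    X * derivative (laguerre α (n+1)) =
      C ((n : ℝ) + 1) * laguerre α (n+1) - C ((n : ℝ) + 1 + α) * laguerre α n := by
  induction n with
  | zero =>
    constructor
    · show derivative (C (1+α) - X) = derivative (1 : ℝ[X]) - 1
      simp
    · show X * derivative (C (1+α) - X) = _
      simp [laguerre]
  | succ m ih =>
    obtain ⟨ih1, ih2⟩ := ih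
    have hrec := lag_rec α m
    have hrec' := congrArg derivative hrec
    simp only [derivative_mul, derivative_C, derivative_sub, derivative_X, zero_mul, zero_sub,
      zero_add] at hrec'
    have hC : (C ((m : ℝ) + 2) : ℝ[X]) ≠ 0 := by
      simp only [ne_eq, C_eq_zero]; positivity
    simp only [C_add, C_mul, map_ofNat, C_1] at hrec hrec' ih1 ih2
    have h1 : derivative (laguerre α (m+2)) =
        derivative (laguerre α (m+1)) - laguerre α (m+1) := by
      apply mul_left_cancel₀ hC
      simp only [C_add, C_mul, map_ofNat, C_1]
      linear_combination hrec' + (C (m:ℝ) + 1 + C α) * ih1 - ih2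
    refine ⟨h1, ?_⟩
    push_cast
    simp only [C_add, C_mul, map_ofNat, C_1]
    linear_combination X * h1 + ih2 - hrec

lemma lag_ode (α : ℝ) (n : ℕ) :
    X * derivative (derivative (laguerre α n)) + (C (α + 1) - X) * derivative (laguerre α n)
      + C (n : ℝ) * laguerre α n = 0 := by
  cases n with
  | zero => simp [laguerre]
  | succ m =>
    obtain ⟨h1, h2⟩ := lag_deriv α m
    have h2' := congrArg derivative h2
    simp only [derivative_mul, derivative_C, derivative_sub, derivative_X, zero_mul, zero_add,
      one_mul] at h2'
    push_cast
    simp only [C_add, C_mul, map_ofNat, C_1] at h1 h2 h2' ⊢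
    linear_combination h2' - h2 + (C (m:ℝ) + 1 + C α) * h1

lemma lag_deg_coeff (α : ℝ) (n : ℕ) :
    (laguerre α n).natDegree ≤ n ∧
      (laguerre α n).coeff n = (-1) ^ n / (n.factorial : ℝ) := by
  induction n using Nat.twoStepInduction with
  | zero => simp [laguerre]
  | one =>
    constructor
    · show (C (1+α) - X).natDegree ≤ 1
      apply le_trans (natDegree_sub_le _ _)
      simp [natDegree_X_le]
    · show (C (1+α) - X).coeff 1 = _
      simp [coeff_sub, coeff_C, coeff_X, coeff_one]
  | more n ih2 ih1 =>
    have hq : laguerre α (n+2) = C (((n : ℝ) + 2)⁻¹) *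
        ((C (2 * (n : ℝ) + 3 + α) - X) * laguerre α (n + 1)
          - C ((n : ℝ) + 1 + α) * laguerre α n) := rfl
    constructor
    · rw [hq]
      apply le_trans (natDegree_C_mul_le _ _)
      apply le_trans (natDegree_sub_le _ _)
      apply max_le
      · apply le_trans (natDegree_mul_le)
        have h1 : (C (2 * (n : ℝ) + 3 + α) - X).natDegree ≤ 1 := by
          exact le_trans (natDegree_sub_le _ _) (max_le (by simp only [natDegree_C]; omega) natDegree_X_le)
        calc (C (2 * (n : ℝ) + 3 + α) - X).natDegree + (laguerre α (n+1)).natDegree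
            ≤ 1 + (n+1) := Nat.add_le_add h1 ih1.1
          _ ≤ n + 2 := by omega
      · apply le_trans (natDegree_C_mul_le _ _)
        omega
    · rw [hq, sub_mul, coeff_C_mul, coeff_sub, coeff_sub, coeff_C_mul, coeff_C_mul,
        coeff_X_mul, coeff_eq_zero_of_natDegree_lt (lt_of_le_of_lt ih1.1 (by omega)),
        coeff_eq_zero_of_natDegree_lt (lt_of_le_of_lt ih2.1 (by omega)), ih1.2]
      have h2 : ((n:ℝ) + 2) ≠ 0 := by positivity
      have hf : ((n+1).factorial : ℝ) ≠ 0 := by positivity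
      rw [show (n+2).factorial = (n+2) * (n+1).factorial from rfl]
      push_cast
      field_simp
      ring

lemma poly_deriv_finset_prod {ι : Type*} [DecidableEq ι] (s : Finset ι) (f : ι → Polynomial ℝ) :
    derivative (∏ b ∈ s, f b) = ∑ b ∈ s, (∏ a ∈ s.erase b, f a) * derivative (f b) := by
  induction s using Finset.induction_on with
  | empty => simp
  | insert a s ha ih =>
    rw [Finset.prod_insert ha, derivative_mul, ih, Finset.sum_insert ha,
      Finset.erase_insert ha, Finset.mul_sum]
    congr 1
    · ring
    · refine Finset.sum_congr rfl fun b hb => ?_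
      have hba : b ≠ a := fun h => ha (h ▸ hb)
      rw [Finset.erase_insert_of_ne hba.symm,
        Finset.prod_insert (fun h => ha (Finset.mem_of_mem_erase h))]
      ring

lemma electro (N : ℕ) (ν : ℝ) (z : Fin N → ℝ) (hinj : Function.Injective z)
    (hroot : ∀ i, (laguerre (ν - 1) N).eval (z i) = 0) (i : Fin N) :
    z i - ν = ∑ k ∈ Finset.univ.erase i, 2 * z i / (z i - z k) := by
  set L := laguerre (ν - 1) N with hLdef
  obtain ⟨hdeg_le, hcoeff⟩ := lag_deg_coeff (ν - 1) N
  have hcne : L.coeff N ≠ 0 := by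
    rw [hcoeff]
    apply div_ne_zero (pow_ne_zero _ (by norm_num)) (by positivity)
  have hL0 : L ≠ 0 := fun h => hcne (by simp [h])
  have hdeg : L.natDegree = N := le_antisymm hdeg_le (le_natDegree_of_ne_zero hcne)
  set M : Multiset ℝ := Finset.univ.val.map z with hM
  have hnd : M.Nodup := Multiset.Nodup.map hinj Finset.univ.nodup
  have hMle : M ≤ L.roots := by
    rw [Multiset.le_iff_count]
    intro a
    by_cases ha : a ∈ M
    · calc Multiset.count a M ≤ 1 := Multiset.nodup_iff_count_le_one.1 hnd a
        _ ≤ Multiset.count a L.roots := by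
            rw [Multiset.one_le_count_iff_mem, mem_roots hL0]
            obtain ⟨j, -, rfl⟩ := Multiset.mem_map.1 ha
            exact hroot j
    · simp [Multiset.count_eq_zero.2 ha]
  have hroots : L.roots = M := (Multiset.eq_of_le_of_card_le hMle (by
    rw [show Multiset.card M = N by simp [hM], ← hdeg]; exact L.card_roots')).symm
  have hsplits : Splits L := (splits_iff_card_roots).2 (by
    rw [hroots, hdeg]; simp [hM])
  have hfac := hsplits.eq_prod_roots
  rw [hroots] at hfac
  set c := L.leadingCoeff with hcdef
  have hc0 : c ≠ 0 := leadingCoeff_ne_zero.2 hL0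
  have hQ : (M.map fun a => X - C a).prod = ∏ j, (X - C (z j)) := by
    rw [hM, Multiset.map_map]
    rfl
  rw [hQ] at hfac
  -- split off factor i
  set P : ℝ[X] := ∏ j ∈ Finset.univ.erase i, (X - C (z j)) with hPdef
  have hQP : (∏ j, (X - C (z j))) = (X - C (z i)) * P :=
    (Finset.mul_prod_erase Finset.univ _ (Finset.mem_univ i)).symm
  -- evaluate the ODE at z i
  have hode := lag_ode (ν - 1) N
  rw [← hLdef] at hode
  have hev := congrArg (eval (z i)) hode
  rw [hfac, hQP] at hev
  simp only [derivative_mul, derivative_sub, derivative_X, derivative_C, sub_zero, one_mul,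
    derivative_add, zero_mul, zero_add, eval_add, eval_mul, eval_sub, eval_X, eval_C,
    eval_zero, sub_self, zero_mul, mul_zero, add_zero] at hev
  have hPe : eval (z i) P = ∏ j ∈ Finset.univ.erase i, (z i - z j) := by
    simp [hPdef, eval_prod]
  have hPne : eval (z i) P ≠ 0 := by
    rw [hPe]
    apply Finset.prod_ne_zero_iff.2
    intro j hj
    exact sub_ne_zero.2 (hinj.ne (Finset.ne_of_mem_erase hj).symm)
  have hdP : eval (z i) (derivative P) =
      ∑ k ∈ Finset.univ.erase i, ∏ j ∈ (Finset.univ.erase i).erase k, (z i - z j) := by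
    rw [hPdef, poly_deriv_finset_prod]
    simp [eval_finset_sum, eval_prod]
  have h5 : 2 * z i * eval (z i) (derivative P) + (ν - z i) * eval (z i) P = 0 := by
    have h6 : c * (2 * z i * eval (z i) (derivative P) + (ν - z i) * eval (z i) P) = 0 := by
      linear_combination hev
    rcases mul_eq_zero.1 h6 with h | h
    · exact absurd h hc0
    · exact h
  have hgoal : (∑ k ∈ Finset.univ.erase i, 2 * z i / (z i - z k)) * eval (z i) P
      = (z i - ν) * eval (z i) P := by
    rw [Finset.sum_mul]
    calc ∑ k ∈ Finset.univ.erase i, 2 * z i / (z i - z k) * eval (z i) P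
        = ∑ k ∈ Finset.univ.erase i,
            2 * z i * ∏ j ∈ (Finset.univ.erase i).erase k, (z i - z j) := by
          refine Finset.sum_congr rfl fun k hk => ?_
          have hd : z i - z k ≠ 0 := sub_ne_zero.2 (hinj.ne (Finset.ne_of_mem_erase hk).symm)
          rw [hPe, ← Finset.mul_prod_erase _ _ hk]
          field_simp
      _ = (z i - ν) * eval (z i) P := by
          rw [← Finset.mul_sum, ← hdP]
          linarith [h5]
  exact (mul_right_cancel₀ hPne hgoal).symm

lemma sum_erase_swap {M : Type*} [AddCommMonoid M] {n : ℕ} (g : Fin n → Fin n → M) :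
    ∑ i, ∑ k ∈ Finset.univ.erase i, g i k = ∑ i, ∑ k ∈ Finset.univ.erase i, g k i := by
  rw [Finset.sum_sigma', Finset.sum_sigma']
  refine Finset.sum_nbij' (fun p => ⟨p.2, p.1⟩) (fun p => ⟨p.2, p.1⟩) ?_ ?_ ?_ ?_ ?_ <;>
    simp [Finset.mem_sigma, Finset.mem_erase, eq_comm]

lemma psum (N : ℕ) (ν : ℝ) (z : Fin N → ℝ) (hinj : Function.Injective z)
    (helec : ∀ i, z i - ν = ∑ k ∈ Finset.univ.erase i, 2 * z i / (z i - z k))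
    (u : ℕ) :
    (∑ i, z i ^ (u + 1)) =
      (∑ m ∈ Finset.range (u + 1), (∑ i, z i ^ (u - m)) * (∑ i, z i ^ m))
        - (((u : ℝ) + 1) - ν) * ∑ i, z i ^ u := by
  have hd : ∀ i k : Fin N, k ≠ i → z i - z k ≠ 0 := fun i k hk =>
    sub_ne_zero.2 (hinj.ne (Ne.symm hk))
  -- step 1 : p_{u+1} = ν p_u + 2A
  have h1 : (∑ i, z i ^ (u + 1)) = ν * (∑ i, z i ^ u)
      + ∑ i, ∑ k ∈ Finset.univ.erase i, 2 * z i ^ (u + 1) / (z i - z k) := by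
    have key : ∀ i : Fin N, z i ^ (u + 1) = ν * z i ^ u
        + ∑ k ∈ Finset.univ.erase i, 2 * z i ^ (u + 1) / (z i - z k) := by
      intro i
      have h := helec i
      have h2 : z i ^ u * ∑ k ∈ Finset.univ.erase i, 2 * z i / (z i - z k)
          = ∑ k ∈ Finset.univ.erase i, 2 * z i ^ (u + 1) / (z i - z k) := by
        rw [Finset.mul_sum]
        refine Finset.sum_congr rfl fun k hk => ?_
        rw [mul_div_assoc']
        congr 1
        ring
      rw [← h2, ← h]
      ring
    rw [Finset.sum_congr rfl fun i _ => key i, Finset.sum_add_distrib, ← Finset.mul_sum]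
  -- step 2 : symmetrization
  have h2 : ∑ i, ∑ k ∈ Finset.univ.erase i, 2 * z i ^ (u + 1) / (z i - z k)
      = ∑ i, ∑ k ∈ Finset.univ.erase i, ∑ m ∈ Finset.range (u + 1),
          z i ^ m * z k ^ (u - m) := by
    have hswap := sum_erase_swap (n := N)
      (fun i k => z i ^ (u + 1) / (z i - z k))
    have hsplit : ∑ i, ∑ k ∈ Finset.univ.erase i, 2 * z i ^ (u + 1) / (z i - z k)
        = ∑ i, ∑ k ∈ Finset.univ.erase i,
            (z i ^ (u + 1) / (z i - z k) + z k ^ (u + 1) / (z k - z i)) := by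
      rw [Finset.sum_congr rfl fun i _ => Finset.sum_add_distrib,
        Finset.sum_add_distrib, ← hswap, ← Finset.sum_add_distrib]
      refine Finset.sum_congr rfl fun i _ => ?_
      rw [← Finset.sum_add_distrib]
      refine Finset.sum_congr rfl fun k hk => ?_
      ring
    rw [hsplit]
    refine Finset.sum_congr rfl fun i _ => Finset.sum_congr rfl fun k hk => ?_
    have hki : (k : Fin N) ≠ i := Finset.ne_of_mem_erase hk
    have hdik := hd i k hki
    have hdki := hd k i (Ne.symm hki)
    have hg := geom_sum₂_mul (z i) (z k) (u + 1)
    simp only [Nat.add_sub_cancel] at hg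
    rw [div_add_div _ _ hdik hdki, div_eq_iff (mul_ne_zero hdik hdki)]
    linear_combination (z i - z k) * hg
  -- step 3 : evaluate the symmetric double sum
  have h3 : ∑ i, ∑ k ∈ Finset.univ.erase i, ∑ m ∈ Finset.range (u + 1),
        z i ^ m * z k ^ (u - m)
      = ∑ m ∈ Finset.range (u + 1),
          ((∑ i, z i ^ (u - m)) * (∑ i, z i ^ m) - ∑ i, z i ^ u) := by
    rw [Finset.sum_congr rfl fun i _ => Finset.sum_comm, Finset.sum_comm]
    refine Finset.sum_congr rfl fun m hm => ?_
    have hmu : m ≤ u := by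
      have := Finset.mem_range.1 hm; omega
    have hinner : ∀ i : Fin N, ∑ k ∈ Finset.univ.erase i, z i ^ m * z k ^ (u - m)
        = z i ^ m * (∑ k, z k ^ (u - m)) - z i ^ u := by
      intro i
      rw [← Finset.mul_sum, Finset.sum_erase_eq_sub (Finset.mem_univ i), mul_sub, ← pow_add,
        show m + (u - m) = u by omega]
    rw [Finset.sum_congr rfl fun i _ => hinner i, Finset.sum_sub_distrib]
    congr 1
    rw [← Finset.sum_mul, mul_comm]
  rw [h1, h2, h3, Finset.sum_sub_distrib, Finset.sum_const, Finset.card_range]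
  ring

theorem stmt_16 (N : ℕ) (ν : ℝ) (hν : 0 < ν) (z : Fin N → ℝ)
    (hord : ∀ i j : Fin N, i < j → z j < z i)
    (hpos : ∀ i, 0 < z i)
    (hroot : ∀ i, (laguerre (ν - 1) N).eval (z i) = 0)
    (r : Fin N → ℝ) (hr : ∀ i, r i = Real.sqrt (2 * z i))
    (s : ℕ → ℝ) (hs : ∀ n, s n = ∑ j, (r j) ^ n) :
    s 0 = N ∧
      ∀ l : ℕ, 1 ≤ l →
        s (2 * l) = 2 * ((∑ m ∈ Finset.range l, s (2 * (l - 1 - m)) * s (2 * m))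
          - ((l : ℝ) - ν) * s (2 * (l - 1))) := by
  have hinj : Function.Injective z := by
    intro a b hab
    by_contra h
    rcases lt_or_gt_of_ne h with h' | h'
    · exact (ne_of_gt (hord a b h')) hab
    · exact (ne_of_lt (hord b a h')) hab
  have helec := electro N ν z hinj hroot
  have hs2 : ∀ u : ℕ, s (2 * u) = 2 ^ u * ∑ i, z i ^ u := by
    intro u
    rw [hs, Finset.mul_sum]
    refine Finset.sum_congr rfl fun j _ => ?_
    rw [hr, pow_mul, Real.sq_sqrt (by have := hpos j; linarith), mul_pow]
  constructor
  · rw [hs]; simp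
  · intro l hl
    obtain ⟨u, rfl⟩ : ∃ u, l = u + 1 := ⟨l - 1, by omega⟩
    have hkey := psum N ν z hinj helec u
    rw [hs2, Nat.add_sub_cancel, hs2, hkey]
    have hterm : ∀ m ∈ Finset.range (u + 1),
        s (2 * (u - m)) * s (2 * m)
          = 2 ^ u * ((∑ i, z i ^ (u - m)) * (∑ i, z i ^ m)) := by
      intro m hm
      have hmu : m ≤ u := by have := Finset.mem_range.1 hm; omega
      rw [hs2, hs2, show (2:ℝ)^u = 2^(u-m) * 2^m by
        rw [← pow_add]; congr 1; omega]
      ring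
    rw [Finset.sum_congr rfl hterm, ← Finset.mul_sum]
    push_cast
    ring
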